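/- Let β > 1, let φ_β(y) = exp(−|y|^β/β) / (2 β^{1/β} Γ(1 + 1/β)) be the β-Gaussian density, and let 0 ≤ α ≤ 1/2. Then ∫_ℝ e^{α|y|} φ_β(y) dy ≤ exp(2α). -/

import Mathlib

open Real MeasureTheory

/-- The β-Gaussian (generalized Gaussian) density with unit scale. -/
noncomputable def betaGaussianDensity (β y : ℝ) : ℝ :=
  Real.exp (-(|y| ^ β) / β) / (2 * β ^ (1 / β) * Real.Gamma (1 + 1 / β))

/-- For `β > 1` and `0 ≤ α ≤ 1/2`, `∫_ℝ e^{α|y|} φ_β(y) dy ≤ exp(2α)`. -/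
theorem exp_moment_betaGaussian_le (β α : ℝ) (hβ : 1 < β) (hα0 : 0 ≤ α) (hα : α ≤ 1 / 2) :
    (∫ y : ℝ, Real.exp (α * |y|) * betaGaussianDensity β y) ≤ Real.exp (2 * α) := by
  have hβ0 : (0:ℝ) < β := by linarith
  have hΓ : 0 < Real.Gamma (1 + 1 / β) := Real.Gamma_pos_of_pos (by positivity)
  set Z : ℝ := 2 * β ^ (1 / β) * Real.Gamma (1 + 1 / β) with hZdef
  have hZ0 : 0 < Z := by positivity
  have hα1 : (0:ℝ) < 1 - α := by linarith
  set b : ℝ := (1 - α) / β with hbdef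
  have hb0 : 0 < b := div_pos hα1 hβ0
  -- Young's inequality: t ≤ t^β/β + (β-1)/β for t ≥ 0
  have young : ∀ t : ℝ, 0 ≤ t → t ≤ t ^ β / β + (β - 1) / β := by
    intro t ht
    have hconj : β.HolderConjugate (Real.conjExponent β) :=
      Real.HolderConjugate.conjExponent hβ
    have h := Real.young_inequality_of_nonneg ht zero_le_one hconj
    rw [mul_one, Real.one_rpow] at h
    have hq : Real.conjExponent β = β / (β - 1) := rfl
    rw [hq, one_div_div] at h
    exact h
  -- the dominating function
  set g : ℝ → ℝ := fun y =>
    Real.exp (α * (β - 1) / β) * (Real.exp (-(b * |y| ^ β)) / Z) with hgdef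
  have hpt : ∀ y : ℝ, Real.exp (α * |y|) * betaGaussianDensity β y ≤ g y := by
    intro y
    have ht : (0:ℝ) ≤ |y| := abs_nonneg y
    have htβ : (0:ℝ) ≤ |y| ^ β := Real.rpow_nonneg ht β
    have hy := young |y| ht
    have key : α * |y| + -(|y| ^ β) / β ≤ α * (β - 1) / β + -(b * |y| ^ β) := by
      have h1 : α * |y| ≤ α * (|y| ^ β / β + (β - 1) / β) :=
        mul_le_mul_of_nonneg_left hy hα0
      have hbe : b * |y| ^ β = (1 - α) * |y| ^ β / β := by
        rw [hbdef]; ring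
      rw [hbe]
      have h2 : α * |y| * β ≤ α * |y| ^ β + α * (β - 1) := by
        have h2' := mul_le_mul_of_nonneg_right h1 hβ0.le
        calc α * |y| * β ≤ α * (|y| ^ β / β + (β - 1) / β) * β := h2'
          _ = α * |y| ^ β + α * (β - 1) := by field_simp
      have hgoal : (α * |y| + -(|y| ^ β) / β)
          - (α * (β - 1) / β + -((1 - α) * |y| ^ β / β))
          = (α * |y| * β - α * |y| ^ β - α * (β - 1)) / β := by
        field_simp
        ring
      have hnum : (α * |y| * β - α * |y| ^ β - α * (β - 1)) / β ≤ 0 :=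
        div_nonpos_of_nonpos_of_nonneg (by linarith) hβ0.le
      linarith
    calc Real.exp (α * |y|) * betaGaussianDensity β y
        = Real.exp (α * |y| + -(|y| ^ β) / β) / Z := by
          rw [betaGaussianDensity, Real.exp_add, mul_div_assoc]
      _ ≤ Real.exp (α * (β - 1) / β + -(b * |y| ^ β)) / Z := by
          gcongr
      _ = g y := by rw [hgdef, Real.exp_add, mul_div_assoc]
  -- integrability of the dominating function
  have hint1 : IntegrableOn (fun x : ℝ => Real.exp (-(b * |x| ^ β))) (Set.Ioi 0) := by
    have h0 : IntegrableOn (fun x : ℝ => Real.exp (-b * x ^ β)) (Set.Ioi 0) := by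
      have := integrableOn_rpow_mul_exp_neg_mul_rpow (p := β) (s := 0)
        (by norm_num) hβ0 hb0
      simpa using this
    apply h0.congr_fun _ measurableSet_Ioi
    intro x hx
    simp only [abs_of_pos (show (0:ℝ) < x from hx), neg_mul]
  have hint2 : IntegrableOn (fun x : ℝ => Real.exp (-(b * |x| ^ β))) (Set.Iic 0) := by
    rw [← Measure.map_neg_eq_self (volume : Measure ℝ)]
    have m : MeasurableEmbedding fun x : ℝ => -x := (Homeomorph.neg ℝ).measurableEmbedding
    rw [m.integrableOn_map_iff]
    simp_rw [Function.comp_def, abs_neg, Set.neg_preimage, Set.neg_Iic, neg_zero]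
    exact Iff.mpr integrableOn_Ici_iff_integrableOn_Ioi hint1
  have hint : Integrable (fun x : ℝ => Real.exp (-(b * |x| ^ β))) := by
    rw [← integrableOn_univ, ← Set.Iic_union_Ioi (a := (0:ℝ))]
    exact hint2.union hint1
  have hgint : Integrable g := by
    rw [hgdef]
    exact (hint.div_const Z).const_mul _
  -- compute the integral of g
  have hIabs : (∫ y : ℝ, Real.exp (-(b * |y| ^ β)))
      = 2 * (b ^ (-1 / β) * Real.Gamma (1 / β + 1)) := by
    have heq : (fun y : ℝ => Real.exp (-(b * |y| ^ β)))
        = (fun y : ℝ => (fun x : ℝ => Real.exp (-b * x ^ β)) |y|) := by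
      funext y; simp [neg_mul]
    rw [heq, integral_comp_abs (f := fun x : ℝ => Real.exp (-b * x ^ β)),
      integral_exp_neg_mul_rpow hβ0 hb0]
  have hIg : (∫ y : ℝ, g y)
      = Real.exp (α * (β - 1) / β) * (1 - α) ^ (-(1 / β)) := by
    have hΓ' : Real.Gamma (1 / β + 1) = Real.Gamma (1 + 1 / β) := by rw [add_comm]
    have hbpow : b ^ (-1 / β) = (1 - α) ^ (-(1 / β)) * β ^ (1 / β) := by
      rw [hbdef, neg_div, Real.div_rpow hα1.le hβ0.le,
        Real.rpow_neg hβ0.le, div_eq_mul_inv, inv_inv]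
    have hB : (β : ℝ) ^ (1 / β) ≠ 0 := by positivity
    have hΓne : Real.Gamma (1 + 1 / β) ≠ 0 := ne_of_gt hΓ
    have hfrac : 2 * (b ^ (-1 / β) * Real.Gamma (1 / β + 1)) / Z
        = (1 - α) ^ (-(1 / β)) := by
      rw [hΓ', hbpow, hZdef]
      field_simp
    rw [hgdef]
    simp only
    rw [MeasureTheory.integral_const_mul, MeasureTheory.integral_div, hIabs,
      ← mul_div_assoc' ] 
    rw [mul_div_assoc] at *
    rw [hfrac]
  -- main comparison
  have hmono : (∫ y : ℝ, Real.exp (α * |y|) * betaGaussianDensity β y) ≤ ∫ y : ℝ, g y := by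
    apply integral_mono_of_nonneg _ hgint (Filter.Eventually.of_forall hpt)
    apply Filter.Eventually.of_forall
    intro y
    have h0 : 0 < betaGaussianDensity β y := by
      rw [betaGaussianDensity]; positivity
    positivity
  refine hmono.trans ?_
  rw [hIg]
  -- final numeric inequality
  have h1 : ((1:ℝ) - α)⁻¹ ≤ Real.exp (2 * α) := by
    have h2 : α / (1 - α) + 1 ≤ Real.exp (α / (1 - α)) := Real.add_one_le_exp _
    have h3 : ((1:ℝ) - α)⁻¹ = α / (1 - α) + 1 := by field_simp; ring
    have h4 : α / (1 - α) ≤ 2 * α := by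
      rw [div_le_iff₀ hα1]
      nlinarith
    calc ((1:ℝ) - α)⁻¹ = α / (1 - α) + 1 := h3
      _ ≤ Real.exp (α / (1 - α)) := h2
      _ ≤ Real.exp (2 * α) := Real.exp_le_exp.mpr h4
  have h5 : ((1:ℝ) - α) ^ (-(1 / β)) ≤ Real.exp (2 * α / β) := by
    calc ((1:ℝ) - α) ^ (-(1 / β)) = (((1:ℝ) - α)⁻¹) ^ (1 / β) := by
          rw [← Real.rpow_neg_one, ← Real.rpow_mul hα1.le]
          norm_num
      _ ≤ (Real.exp (2 * α)) ^ (1 / β) :=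
          Real.rpow_le_rpow (by positivity) h1 (by positivity)
      _ = Real.exp (2 * α / β) := by
          rw [← Real.exp_mul, mul_one_div]
  calc Real.exp (α * (β - 1) / β) * (1 - α) ^ (-(1 / β))
      ≤ Real.exp (α * (β - 1) / β) * Real.exp (2 * α / β) :=
        mul_le_mul_of_nonneg_left h5 (Real.exp_nonneg _)
    _ = Real.exp (α * (β - 1) / β + 2 * α / β) := (Real.exp_add _ _).symm
    _ ≤ Real.exp (2 * α) := by
        apply Real.exp_le_exp.mpr
        rw [← add_div, div_le_iff₀ hβ0]
        nlinarith
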